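/- arXiv:1601.01054 — 2 statements merged into one kernel-verified Lean document; each statement's English description precedes it below -/
import Mathlib

section
/- For a merge node with 2 input links and 1 output link, with demands S1, S2 ≥ 0, supply R ≥ 0, and positive priorities p1, p2, the flows f1 = min{S1, max{(p1/(p1+p2))·R, R − S2}} and f2 = min{S2, max{(p2/(p1+p2))·R, R − S1}} satisfy the supply constraint f1 + f2 ≤ R. -/
/-- 2-to-1 merge node flows satisfy the supply constraint. -/
theorem merge_flows_supply_constraint
    (S1 S2 R p1 p2 : ℝ)
    (hS1 : 0 ≤ S1) (hS2 : 0 ≤ S2) (hR : 0 ≤ R)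
    (hp1 : 0 < p1) (hp2 : 0 < p2) :
    min S1 (max (p1 / (p1 + p2) * R) (R - S2)) +
      min S2 (max (p2 / (p1 + p2) * R) (R - S1)) ≤ R := by
  have hp : p1 + p2 ≠ 0 := by positivity
  have hsum : p1 / (p1 + p2) * R + p2 / (p1 + p2) * R = R := by
    field_simp
  set a1 := p1 / (p1 + p2) * R with ha1
  set a2 := p2 / (p1 + p2) * R with ha2
  rcases le_total (R - S2) a1 with h1 | h1
  · rcases le_total (R - S1) a2 with h2 | h2
    · rw [max_eq_left h1, max_eq_left h2]
      have := min_le_right S1 a1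
      have := min_le_right S2 a2
      linarith
    · rw [max_eq_right h2]
      have := min_le_left S1 (max a1 (R - S2))
      have := min_le_right S2 (R - S1)
      linarith
  · rw [max_eq_right h1]
    have := min_le_right S1 (R - S2)
    have := min_le_left S2 (max a2 (R - S1))
    linarith
end

section
/- The 2-input merge flow formula is invariant: if the flow from input link 1 is supply-constrained, i.e., f1 = max{(p1/(p1+p2))R, R − S2} < S1, then replacing the demand S1 by any value S1' ≥ f1 (in particular the link capacity F1 ≥ S1) leaves both computed flows f1 and f2 unchanged, provided f2 is also supply-constrained (f2 < S2). -/
/-- invariance of the 2-input merge flow formula. If the flow from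
input 1 is supply-constrained (f1 = max{(p1/(p1+p2))R, R−S2} < S1) and the flow
from input 2 is also supply-constrained (f2 = max{(p2/(p1+p2))R, R−S1} < S2),
then replacing S1 by any S1' ≥ f1 leaves both computed flows unchanged. -/
theorem merge_flows_invariance
    (S1 S2 R p1 p2 : ℝ)
    (hS1 : 0 ≤ S1) (hS2 : 0 ≤ S2) (hR : 0 ≤ R)
    (hp1 : 0 < p1) (hp2 : 0 < p2)
    (hf1 : max (p1 / (p1 + p2) * R) (R - S2) < S1)
    (hf2 : max (p2 / (p1 + p2) * R) (R - S1) < S2)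
    (S1' : ℝ) (hS1' : max (p1 / (p1 + p2) * R) (R - S2) ≤ S1') :
    min S1' (max (p1 / (p1 + p2) * R) (R - S2)) =
        min S1 (max (p1 / (p1 + p2) * R) (R - S2)) ∧
      min S2 (max (p2 / (p1 + p2) * R) (R - S1')) =
        min S2 (max (p2 / (p1 + p2) * R) (R - S1)) := by
  have hp12 : 0 < p1 + p2 := by linarith
  have h1 : p1 / (p1 + p2) * R ≤ S1 := le_of_lt (lt_of_le_of_lt (le_max_left _ _) hf1)
  have h1' : p1 / (p1 + p2) * R ≤ S1' := le_trans (le_max_left _ _) hS1'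
  have hsum : p1 / (p1 + p2) * R + p2 / (p1 + p2) * R = R := by
    field_simp
  have hkey : ∀ T : ℝ, p1 / (p1 + p2) * R ≤ T →
      max (p2 / (p1 + p2) * R) (R - T) = p2 / (p1 + p2) * R := by
    intro T hT
    exact max_eq_left (by linarith)
  constructor
  · rw [min_eq_right hS1', min_eq_right (le_of_lt hf1)]
  · rw [hkey S1' h1', hkey S1 h1]
end
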